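/- Let n be a positive integer and let ℓ : Fin n → Fin n → ℤ be a symmetric matrix (ℓ i j = ℓ j i for all i, j), thought of as the matrix of pairwise linking numbers of an n-component link. If for every index i the set Fin n \ {i} is algebraically split with respect to ℓ, then the full index set Fin n is algebraically split with respect to ℓ. -/

import Mathlib

/-- A subset `S` of `Fin n` is *algebraically split* with respect to a matrix of
linking numbers `ℓ` if it can be written as the disjoint union of two nonempty
subsets `A` and `B` with `ℓ i j = 0` whenever `i ∈ A` and `j ∈ B`. -/
def AlgebraicallySplit {n : ℕ} (ℓ : Fin n → Fin n → ℤ) (S : Finset (Fin n)) : Prop :=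
  ∃ A B : Finset (Fin n), A.Nonempty ∧ B.Nonempty ∧ Disjoint A B ∧ A ∪ B = S ∧
    ∀ i ∈ A, ∀ j ∈ B, ℓ i j = 0

namespace AlgSplitAux

variable {n : ℕ} (ℓ : Fin n → Fin n → ℤ)

/-- One step of a walk inside `S`: the new vertex lies in `S` and is linked. -/
def Step (S : Finset (Fin n)) (x y : Fin n) : Prop := y ∈ S ∧ ℓ x y ≠ 0

/-- Reachability inside `S`. -/
def Reach (S : Finset (Fin n)) (a b : Fin n) : Prop :=
  Relation.ReflTransGen (Step ℓ S) a b

/-- Reachability in exactly `k` steps. -/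
def ReachN (S : Finset (Fin n)) : ℕ → Fin n → Fin n → Prop
  | 0, a, b => a = b
  | k + 1, a, b => ∃ c, ReachN S k a c ∧ Step ℓ S c b

lemma reach_exists_reachN {S : Finset (Fin n)} {a b : Fin n} (h : Reach ℓ S a b) :
    ∃ k, ReachN ℓ S k a b := by
  induction h with
  | refl => exact ⟨0, rfl⟩
  | tail _ hstep ih =>
    obtain ⟨k, hk⟩ := ih
    exact ⟨k + 1, _, hk, hstep⟩

lemma split_of_not_reach {S : Finset (Fin n)} {a b : Fin n} (ha : a ∈ S) (hb : b ∈ S)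
    (hr : ¬ Reach ℓ S a b) : AlgebraicallySplit ℓ S := by
  classical
  refine ⟨S.filter (fun x => Reach ℓ S a x), S.filter (fun x => ¬ Reach ℓ S a x),
    ⟨a, ?_⟩, ⟨b, ?_⟩, Finset.disjoint_filter_filter_not S S _,
    Finset.filter_union_filter_not_eq _ S, ?_⟩
  · exact Finset.mem_filter.mpr ⟨ha, Relation.ReflTransGen.refl⟩
  · simp [hb, hr]
  · intro i hi j hj
    by_contra hij
    simp only [Finset.mem_filter] at hi hj
    exact hj.2 (hi.2.tail ⟨hj.1, hij⟩)

lemma not_reach_of_split {A B : Finset (Fin n)} (hdisj : Disjoint A B)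
    (hzero : ∀ i ∈ A, ∀ j ∈ B, ℓ i j = 0) {a b : Fin n} (ha : a ∈ A) (hb : b ∈ B) :
    ¬ Reach ℓ (A ∪ B) a b := by
  intro hr
  have key : ∀ x, Reach ℓ (A ∪ B) a x → x ∈ A := by
    intro x hx
    induction hx with
    | refl => exact ha
    | tail _ hstep ih =>
      rcases Finset.mem_union.mp hstep.1 with hy | hy
      · exact hy
      · exact absurd (hzero _ ih _ hy) hstep.2
  exact (Finset.disjoint_left.mp hdisj (key b hr)) hb

end AlgSplitAux

open AlgSplitAux in
theorem algebraicallySplit_of_forall_erase {n : ℕ} (hn : 0 < n)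
    (ℓ : Fin n → Fin n → ℤ) (hsymm : ∀ i j, ℓ i j = ℓ j i)
    (h : ∀ i : Fin n, AlgebraicallySplit ℓ ({i}ᶜ : Finset (Fin n))) :
    AlgebraicallySplit ℓ (Finset.univ : Finset (Fin n)) := by
  classical
  by_contra hcon
  -- the whole graph is connected
  have hconn : ∀ a b : Fin n, Reach ℓ Finset.univ a b := by
    intro a b
    by_contra hr
    exact hcon (split_of_not_reach ℓ (Finset.mem_univ a) (Finset.mem_univ b) hr)
  set u : Fin n := ⟨0, hn⟩ with hu_def
  have hex : ∀ x : Fin n, ∃ k, ReachN ℓ Finset.univ k u x :=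
    fun x => reach_exists_reachN ℓ (hconn u x)
  -- distance from u
  set d : Fin n → ℕ := fun x => Nat.find (hex x) with hd_def
  obtain ⟨w, -, hw⟩ := Finset.exists_max_image Finset.univ d ⟨u, Finset.mem_univ u⟩
  by_cases huw : u = w
  · -- then every vertex equals u, so {u}ᶜ = ∅, contradicting h u
    have hall : ∀ x : Fin n, x = u := by
      intro x
      have h1 : d x ≤ d u := huw ▸ hw x (Finset.mem_univ x)
      have h2 : d u = 0 := Nat.le_zero.mp (Nat.find_le (show ReachN ℓ Finset.univ 0 u u from rfl))
      have h3 : d x = 0 := Nat.le_zero.mp (h2 ▸ h1)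
      have := Nat.find_spec (hex x)
      rw [show Nat.find (hex x) = 0 from h3] at this
      exact this.symm
    obtain ⟨A, B, ⟨a, haA⟩, -, -, hunion, -⟩ := h u
    have : a ∈ ({u}ᶜ : Finset (Fin n)) := hunion ▸ Finset.mem_union_left _ haA
    simp [hall a] at this
  · -- w is not a cut vertex: everything is reachable from u within {w}ᶜ
    have hkey : ∀ k, ∀ x : Fin n, d x = k → x ≠ w → Reach ℓ ({w}ᶜ) u x := by
      intro k
      induction k using Nat.strong_induction_on with
      | _ k IH =>
        intro x hk hxw
        have hx := Nat.find_spec (hex x)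
        rw [show Nat.find (hex x) = k from hk] at hx
        match k, hx, hk with
        | 0, hx, hk =>
          exact hx ▸ Relation.ReflTransGen.refl
        | k' + 1, ⟨c, hc, hstep⟩, hk =>
          have hdc : d c ≤ k' := Nat.find_le hc
          have hcw : c ≠ w := by
            intro hcw
            have h1 : d x ≤ d w := hw x (Finset.mem_univ x)
            rw [hk, ← hcw] at h1
            omega
          have hreach := IH (d c) (by omega) c rfl hcw
          exact hreach.tail ⟨Finset.mem_compl.mpr (by simpa using hxw), hstep.2⟩
    obtain ⟨A, B, ⟨a, haA⟩, ⟨b, hbB⟩, hdisj, hunion, hzero⟩ := h w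
    have huAB : u ∈ A ∪ B := by
      rw [hunion]
      exact Finset.mem_compl.mpr (by simpa using huw)
    rcases Finset.mem_union.mp huAB with huA | huB
    · have hbw : b ≠ w := by
        have : b ∈ ({w}ᶜ : Finset (Fin n)) := hunion ▸ Finset.mem_union_right _ hbB
        simpa using this
      have := not_reach_of_split ℓ hdisj hzero huA hbB
      rw [hunion] at this
      exact this (hkey (d b) b rfl hbw)
    · have haw : a ≠ w := by
        have : a ∈ ({w}ᶜ : Finset (Fin n)) := hunion ▸ Finset.mem_union_left _ haA
        simpa using this
      have hzero' : ∀ i ∈ B, ∀ j ∈ A, ℓ i j = 0 :=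
        fun i hi j hj => (hsymm i j).trans (hzero j hj i hi)
      have := not_reach_of_split ℓ hdisj.symm hzero' huB haA
      rw [Finset.union_comm, hunion] at this
      exact this (hkey (d a) a rfl haw)
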